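/- Let the Fourier transforms of the symbol satisfy 𝓥̂_q(-p) = 𝓥̂_q(p) ∈ ℝ for all p ∈ ℝ and q ∈ ℤ^l, and suppose Σ_q ∫_ℝ |𝓥̂_q(p)| dp < ∞. Define the antilinear operator 𝓟𝓣 on L²(𝕋^l) by (𝓟𝓣 f)(x) = conj(f(-x)). Then the Weyl quantization V of 𝓥_ω is 𝓟𝓣-symmetric: (𝓟𝓣)(Vf) = V(𝓟𝓣 f) for every f ∈ L²(𝕋^l), i.e. [V, 𝓟𝓣] = 0. -/

import Mathlib

open MeasureTheory Complex Real

noncomputable section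

instance : Fact (0 < 2 * π) := ⟨by positivity⟩

/-- The torus `𝕋^l = (ℝ/2πℤ)^l`. -/
abbrev TorusPt (l : ℕ) := Fin l → AddCircle (2 * π)

/-- `e^{i⟨q,x⟩}` for `q ∈ ℤ^l` and `x ∈ 𝕋^l`. -/
def torusChar {l : ℕ} (q : Fin l → ℤ) (x : TorusPt l) : ℂ :=
  ∏ j, (AddCircle.toCircle ((q j) • x j) : ℂ)

/-- The Weyl quantization `V` of the symbol `𝓥_ω(ξ,x) = 𝓥(⟨ω,ξ⟩,x)`, given through the
Fourier data `𝓥̂_q(p)`, `p ∈ ℝ`: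
`(Vf)(x) = ∫_ℝ Σ_q 𝓥̂_q(p) e^{i(⟨q,x⟩+ℏp⟨ω,q⟩/2)} f(x+ℏpω) dp`. -/
def weylOpOmega (l : ℕ) (ω : Fin l → ℝ) (ℏ : ℝ) (Vhat : (Fin l → ℤ) → ℝ → ℂ)
    (f : TorusPt l → ℂ) (x : TorusPt l) : ℂ :=
  ∫ p : ℝ, ∑' q : Fin l → ℤ,
    Vhat q p * torusChar q x *
      Complex.exp (Complex.I * (ℏ * p * (∑ j, ω j * (q j : ℝ)) / 2)) *
      f (fun j => x j + ((ℏ * p * ω j : ℝ) : AddCircle (2 * π)))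

/-- The antilinear operator `𝓟𝓣` on functions on the torus: `(𝓟𝓣 f)(x) = conj (f (-x))`. -/
def PTop {l : ℕ} (f : TorusPt l → ℂ) : TorusPt l → ℂ :=
  fun x => (starRingEnd ℂ) (f (-x))

lemma toCircle_neg' {T : ℝ} (a : AddCircle T) :
    (AddCircle.toCircle (-a) : ℂ) = (starRingEnd ℂ) (AddCircle.toCircle a : ℂ) := by
  have h : AddCircle.toCircle (-a) * AddCircle.toCircle a = 1 := by
    rw [← AddCircle.toCircle_add, neg_add_cancel, AddCircle.toCircle_zero]
  have := congrArg (fun z : Circle => (z : ℂ)) h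
  simp only [Circle.coe_mul, Circle.coe_one] at this
  rw [← Circle.coe_inv_eq_conj]
  exact congrArg _ (eq_inv_of_mul_eq_one_left h)

/-- Remark 1.3: if `𝓥̂_q(-p) = 𝓥̂_q(p) ∈ ℝ` for all `p, q` (and the Fourier
data is summable), then the Weyl quantization `V` of `𝓥_ω` is `𝓟𝓣`-symmetric:
`𝓟𝓣(Vf) = V(𝓟𝓣 f)` for every `f ∈ L²(𝕋^l)`, i.e. `[V,𝓟𝓣] = 0`. -/
theorem weyl_quantization_PT_symmetric
    (l : ℕ) (hl : 1 ≤ l) (ω : Fin l → ℝ) (ℏ : ℝ) (hℏ : ℏ ∈ Set.Icc (0 : ℝ) 1)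
    (Vhat : (Fin l → ℤ) → ℝ → ℂ)
    (hmeas : ∀ q, Measurable (Vhat q))
    (hL1 : (∑' q : Fin l → ℤ, ∫⁻ p : ℝ, (‖Vhat q p‖₊ : ENNReal)) < ⊤)
    (hsym : ∀ (q : Fin l → ℤ) (p : ℝ), Vhat q (-p) = Vhat q p)
    (hreal : ∀ (q : Fin l → ℤ) (p : ℝ), (Vhat q p).im = 0) :
    ∀ f : TorusPt l → ℂ, MemLp f 2 (volume : Measure (TorusPt l)) →
      ∀ x : TorusPt l,
        PTop (weylOpOmega l ω ℏ Vhat f) x = weylOpOmega l ω ℏ Vhat (PTop f) x := by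
  intro f hf x
  unfold PTop weylOpOmega
  rw [← integral_conj]
  rw [← integral_neg_eq_self (fun p : ℝ => ∑' q : Fin l → ℤ,
    Vhat q p * torusChar q x *
      Complex.exp (Complex.I * (ℏ * p * (∑ j, ω j * (q j : ℝ)) / 2)) *
      (starRingEnd ℂ) (f (-(fun j => x j + ((ℏ * p * ω j : ℝ) : AddCircle (2 * π)))))) volume]
  congr 1
  funext p
  rw [starRingEnd_apply, tsum_star]
  congr 1
  funext q
  simp only [star_mul', starRingEnd_apply]
  have hV : star (Vhat q p) = Vhat q (-p) := by
    rw [hsym]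
    exact Complex.conj_eq_iff_im.mpr (hreal q p)
  have hchar : star (torusChar q (-x)) = torusChar q x := by
    unfold torusChar
    rw [star_prod]
    congr 1
    funext j
    have : (q j) • (-x) j = -((q j) • x j) := by simp
    rw [this, toCircle_neg']
    simp only [starRingEnd_apply, star_star]
  have hexp : star (Complex.exp (Complex.I * (ℏ * p * (∑ j, ω j * (q j : ℝ)) / 2)))
      = Complex.exp (Complex.I * (ℏ * (-p : ℝ) * (∑ j, ω j * (q j : ℝ)) / 2)) := by
    rw [← starRingEnd_apply, ← Complex.exp_conj]
    congr 1
    simp only [map_mul, map_div₀, Complex.conj_I, Complex.conj_ofReal, map_ofNat]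
    push_cast
    ring
  have hpt : (fun j => (-x) j + ((ℏ * p * ω j : ℝ) : AddCircle (2 * π)))
      = -(fun j => x j + ((ℏ * (-p) * ω j : ℝ) : AddCircle (2 * π))) := by
    funext j
    show -(x j) + ((ℏ * p * ω j : ℝ) : AddCircle (2 * π))
        = -(x j + ((ℏ * (-p) * ω j : ℝ) : AddCircle (2 * π)))
    rw [neg_add]
    congr 1
    rw [← AddCircle.coe_neg]
    congr 1
    ring
  rw [hV, hchar, hexp, hpt]


end
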